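/- Lower bound on the predicted model decrease: assume (A2), fix v ∈ ℝ^n and γ > 0, define the local model m(s) = (1/2)‖J(v)s + r(v)‖² + (γ/2)‖s‖², and let s solve (J(v)ᵀJ(v) + γI) s = −J(v)ᵀ r(v). Then 𝒥(v) − m(s) ≥ ‖∇𝒥(v)‖² / (2(L_r² + γ)). -/

import Mathlib

open scoped RealInnerProductSpace

/-- The nonlinear least-squares objective `𝒥(v) = (1/2)‖r(v)‖²`. -/
noncomputable def nlsObj {n m : ℕ} (r : EuclideanSpace ℝ (Fin n) → EuclideanSpace ℝ (Fin m))
    (v : EuclideanSpace ℝ (Fin n)) : ℝ :=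
  (1 / 2) * ‖r v‖ ^ 2

/-- The Jacobian `J(v)` of `r` at `v`, as a continuous linear map. -/
noncomputable def nlsJ {n m : ℕ} (r : EuclideanSpace ℝ (Fin n) → EuclideanSpace ℝ (Fin m))
    (v : EuclideanSpace ℝ (Fin n)) :
    EuclideanSpace ℝ (Fin n) →L[ℝ] EuclideanSpace ℝ (Fin m) :=
  fderiv ℝ r v

/-- The gradient `∇𝒥(v) = J(v)ᵀ r(v)`. -/
noncomputable def nlsGrad {n m : ℕ} (r : EuclideanSpace ℝ (Fin n) → EuclideanSpace ℝ (Fin m))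
    (v : EuclideanSpace ℝ (Fin n)) : EuclideanSpace ℝ (Fin n) :=
  ContinuousLinearMap.adjoint (nlsJ r v) (r v)

private lemma rgn_key (Lr γ G a b : ℝ) (hγ : 0 < γ) (hG : 0 ≤ G) (ha : 0 ≤ a)
    (hb : 0 ≤ b) (hle : G ≤ Lr * a + γ * b) :
    G ^ 2 ≤ 1 / 2 * (a ^ 2 + γ * b ^ 2) * (2 * (Lr ^ 2 + γ)) := by
  have h1 : G ^ 2 ≤ (Lr * a + γ * b) ^ 2 := by
    have := pow_le_pow_left₀ hG hle 2
    simpa using this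
  nlinarith [sq_nonneg (Lr * b - a), hγ.le, sq_nonneg a, sq_nonneg b]

/-- Lower bound on the predicted model decrease:
`𝒥(v) − m(s) ≥ ‖∇𝒥(v)‖² / (2(L_r² + γ))`. -/
theorem regularised_gauss_newton_model_decrease_lower_bound
    {n m : ℕ} (hn : 0 < n) (hm : 0 < m)
    (r : EuclideanSpace ℝ (Fin n) → EuclideanSpace ℝ (Fin m))
    (hr : ContDiff ℝ 1 r)
    -- (A2)
    (Lr : ℝ) (hLr : 0 < Lr) (hA2 : ∀ v w, ‖r v - r w‖ ≤ Lr * ‖v - w‖)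
    (v : EuclideanSpace ℝ (Fin n)) (γ : ℝ) (hγ : 0 < γ)
    (s : EuclideanSpace ℝ (Fin n))
    (hstep : ContinuousLinearMap.adjoint (nlsJ r v) (nlsJ r v s) + γ • s =
      -ContinuousLinearMap.adjoint (nlsJ r v) (r v))
    -- the local model m(s) = (1/2)‖J(v)s + r(v)‖² + (γ/2)‖s‖²
    (mdl : EuclideanSpace ℝ (Fin n) → ℝ)
    (hmdl : ∀ sv, mdl sv = (1 / 2) * ‖nlsJ r v sv + r v‖ ^ 2 + (γ / 2) * ‖sv‖ ^ 2) :
    ‖nlsGrad r v‖ ^ 2 / (2 * (Lr ^ 2 + γ)) ≤ nlsObj r v - mdl s := by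
  classical
  set J := nlsJ r v with hJ
  set g := nlsGrad r v with hg
  -- bound on ‖J‖
  have hlip : LipschitzWith ⟨Lr, hLr.le⟩ r := by
    apply LipschitzWith.of_dist_le_mul
    intro x y
    rw [dist_eq_norm, dist_eq_norm]; exact hA2 x y
  have hJle : ‖J‖ ≤ Lr := by
    exact norm_fderiv_le_of_lipschitz ℝ (x₀ := v) hlip
  have hJTle : ‖ContinuousLinearMap.adjoint J‖ ≤ Lr := by
    rwa [LinearIsometryEquiv.norm_map ContinuousLinearMap.adjoint J]
  -- inner product identities
  have hinner : ⟪J s, r v⟫ = ⟪s, g⟫ := by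
    rw [hg, nlsGrad, ContinuousLinearMap.adjoint_inner_right]
  have hsg : ⟪s, g⟫ = -(‖J s‖ ^ 2 + γ * ‖s‖ ^ 2) := by
    have h1 : ⟪s, ContinuousLinearMap.adjoint J (J s) + γ • s⟫ = ⟪s, -g⟫ := by
      rw [hstep]; rfl
    rw [inner_add_right, ContinuousLinearMap.adjoint_inner_right, inner_neg_right,
      real_inner_smul_right, real_inner_self_eq_norm_sq, real_inner_self_eq_norm_sq] at h1
    linarith
  -- the model decrease
  have hdec : nlsObj r v - mdl s = (1 / 2) * (‖J s‖ ^ 2 + γ * ‖s‖ ^ 2) := by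
    rw [hmdl s, nlsObj]
    have hexp : ‖J s + r v‖ ^ 2 = ‖J s‖ ^ 2 + 2 * ⟪J s, r v⟫ + ‖r v‖ ^ 2 := by
      rw [← real_inner_self_eq_norm_sq, inner_add_add_self,
        real_inner_self_eq_norm_sq, real_inner_self_eq_norm_sq,
        real_inner_comm (r v) (J s)]
      ring
    rw [hexp, hinner, hsg]
    ring
  -- bound on ‖g‖
  have hgnorm : ‖g‖ ≤ Lr * ‖J s‖ + γ * ‖s‖ := by
    have : g = -(ContinuousLinearMap.adjoint J (J s) + γ • s) := by
      rw [hstep, neg_neg]; rfl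
    rw [this, norm_neg]
    calc ‖ContinuousLinearMap.adjoint J (J s) + γ • s‖
        ≤ ‖ContinuousLinearMap.adjoint J (J s)‖ + ‖γ • s‖ := norm_add_le _ _
      _ ≤ Lr * ‖J s‖ + γ * ‖s‖ := by
          gcongr
          · calc ‖ContinuousLinearMap.adjoint J (J s)‖
                ≤ ‖ContinuousLinearMap.adjoint J‖ * ‖J s‖ := (ContinuousLinearMap.adjoint J).le_opNorm _
              _ ≤ Lr * ‖J s‖ := by gcongr
          · rw [norm_smul, Real.norm_of_nonneg hγ.le]
  rw [hdec, div_le_iff₀ (by positivity)]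
  exact rgn_key Lr γ ‖g‖ ‖J s‖ ‖s‖ hγ (norm_nonneg _) (norm_nonneg _) (norm_nonneg _) hgnorm
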